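/- In a DAG, for the mutilated graph obtained by removing all edges into a vertex set W, the ancestor relation restricted to vertices outside the descendants of W is unchanged: if v, u ∉ De(W) in G, then v is an ancestor of u in G iff v is an ancestor of u in G with incoming edges to W removed. -/

import Mathlib

/-- In a DAG, removing all edges into a vertex set W leaves the
ancestor relation unchanged on vertices outside the descendants of W: if
v, u ∉ De(W), then v is an ancestor of u in G iff v is an ancestor of u in the
mutilated graph. -/
theorem mutilation_preserves_ancestry_outside_descendants {V : Type*}
    (E : V → V → Prop) (hacyc : ∀ v, ¬ Relation.TransGen E v v) (W : Set V)
    (De : Set V) (hDe : De = {x | ∃ w ∈ W, Relation.ReflTransGen E w x})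
    (v u : V) (hv : v ∉ De) (hu : u ∉ De) :
    Relation.ReflTransGen E v u ↔
      Relation.ReflTransGen (fun a b => E a b ∧ b ∉ W) v u := by
  constructor
  · intro h
    induction h using Relation.ReflTransGen.head_induction_on with
    | refl => exact Relation.ReflTransGen.refl
    | head hab hbu ih =>
      refine Relation.ReflTransGen.head ⟨hab, fun hbW => hu (hDe ▸ ⟨_, hbW, hbu⟩)⟩
        (ih fun hc => hu ?_)
      rw [hDe] at hc ⊢
      obtain ⟨w, hw, hwc⟩ := hc
      exact ⟨w, hw, hwc.trans hbu⟩
  · intro h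
    exact Relation.ReflTransGen.mono (r := fun a b => E a b ∧ b ∉ W) (p := E) (fun a b hab => hab.1) v u h
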